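/- Let x₁,…,xₙ ∈ ℝ and y₁,…,yₙ ∈ ℝ, and suppose ĝ : ℝ → ℝ is monotone nondecreasing with finite range and minimizes g ↦ Σᵢ (yᵢ − g(xᵢ))² over monotone nondecreasing g. Then for every c in the set {ĝ(x₁),…,ĝ(xₙ)}, c equals the average of {yᵢ : ĝ(xᵢ) = c}; that is, c · #{i : ĝ(xᵢ) = c} = Σ_{i : ĝ(xᵢ)=c} yᵢ. -/

import Mathlib

open Classical in
theorem stmt7 (n : ℕ) (x y : Fin n → ℝ) (g₀ : ℝ → ℝ) (hmono : Monotone g₀)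
    (hfin : (Set.range g₀).Finite)
    (hmin : ∀ g : ℝ → ℝ, Monotone g →
      ∑ i, (y i - g₀ (x i)) ^ 2 ≤ ∑ i, (y i - g (x i)) ^ 2) :
    ∀ c ∈ Finset.image (fun i => g₀ (x i)) Finset.univ,
      c * ((Finset.univ.filter (fun i => g₀ (x i) = c)).card : ℝ)
        = ∑ i ∈ Finset.univ.filter (fun i => g₀ (x i) = c), y i := by
  intro c hc
  -- δ : gap to other values of the range
  obtain ⟨δ, hδpos, hδ⟩ : ∃ δ > 0, ∀ r, r ∈ Set.range g₀ → r ≠ c → δ ≤ |r - c| := by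
    have hT : (Set.range g₀ \ {c}).Finite := hfin.diff
    rcases Set.eq_empty_or_nonempty (Set.range g₀ \ {c}) with h | h
    · refine ⟨1, one_pos, fun r hr hne => absurd ?_ (Set.not_nonempty_iff_eq_empty.2 h)⟩
      exact ⟨r, hr, hne⟩
    · set Tf := hT.toFinset with hTf
      have hTfne : Tf.Nonempty := by
        rwa [hTf, Set.Finite.toFinset_nonempty]
      set Ff := Tf.image (fun r => |r - c|) with hFf
      have hFfne : Ff.Nonempty := hTfne.image _
      refine ⟨Ff.min' hFfne, ?_, ?_⟩
      · obtain ⟨a, ha, hav⟩ := Finset.mem_image.1 (Ff.min'_mem hFfne)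
        rw [← hav]
        have : a ≠ c := by
          have := (Set.Finite.mem_toFinset hT).1 ha
          exact this.2
        have : a - c ≠ 0 := sub_ne_zero.2 this
        exact abs_pos.2 this
      · intro r hr hne
        apply Finset.min'_le
        exact Finset.mem_image.2 ⟨r, (Set.Finite.mem_toFinset hT).2 ⟨hr, hne⟩, rfl⟩
  set K := Finset.univ.filter (fun i => g₀ (x i) = c) with hK
  have hKne : K.Nonempty := by
    obtain ⟨i, _, hi⟩ := Finset.mem_image.1 hc
    exact ⟨i, by simp [hK, hi]⟩
  set k : ℝ := (K.card : ℝ) with hk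
  have hkpos : 0 < k := by
    rw [hk]
    exact_mod_cast Finset.card_pos.2 hKne
  set S : ℝ := ∑ i ∈ K, (y i - c) with hS
  -- key inequality from minimality: for all |ε| ≤ δ, 0 ≤ k ε² - 2 ε S
  have key : ∀ ε : ℝ, |ε| ≤ δ → 0 ≤ k * ε ^ 2 - 2 * ε * S := by
    intro ε hε
    set g1 : ℝ → ℝ := fun t => if g₀ t = c then c + ε else g₀ t with hg1
    have hmono1 : Monotone g1 := by
      intro s t hst
      have hst' := hmono hst
      by_cases hs : g₀ s = c <;> by_cases ht : g₀ t = c <;> simp [hg1, hs, ht]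
      · -- g₀ s = c, g₀ t ≠ c : need c + ε ≤ g₀ t
        have hle : c ≤ g₀ t := hs ▸ hst'
        have := hδ (g₀ t) ⟨t, rfl⟩ ht
        have habs : |g₀ t - c| = g₀ t - c := abs_of_nonneg (by linarith)
        have := abs_le.1 hε
        linarith [habs ▸ hδ (g₀ t) ⟨t, rfl⟩ ht]
      · -- g₀ s ≠ c, g₀ t = c : need g₀ s ≤ c + ε
        have hle : g₀ s ≤ c := ht ▸ hst'
        have := hδ (g₀ s) ⟨s, rfl⟩ hs
        have habs : |g₀ s - c| = -(g₀ s - c) := abs_of_nonpos (by linarith)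
        have := abs_le.1 hε
        linarith [habs ▸ hδ (g₀ s) ⟨s, rfl⟩ hs]
      · exact hst'
    have h1 := hmin g1 hmono1
    have hdiff : ∀ i : Fin n, (y i - g1 (x i)) ^ 2 - (y i - g₀ (x i)) ^ 2
        = if g₀ (x i) = c then ε ^ 2 - 2 * ε * (y i - c) else 0 := by
      intro i
      by_cases h : g₀ (x i) = c
      · simp only [hg1, h, if_pos]
        ring
      · simp [hg1, h]
    have hsum : ∑ i, ((y i - g1 (x i)) ^ 2 - (y i - g₀ (x i)) ^ 2)
        = k * ε ^ 2 - 2 * ε * S := by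
      rw [Finset.sum_congr rfl (fun i _ => hdiff i), ← Finset.sum_filter, ← hK, hS, hk,
        Finset.sum_sub_distrib, Finset.sum_const, nsmul_eq_mul, Finset.mul_sum]
    have h2 : ∑ i, ((y i - g1 (x i)) ^ 2 - (y i - g₀ (x i)) ^ 2)
        = (∑ i, (y i - g1 (x i)) ^ 2) - ∑ i, (y i - g₀ (x i)) ^ 2 :=
      Finset.sum_sub_distrib _ _
    rw [h2] at hsum
    linarith
  -- conclude S = 0
  have hS0 : S = 0 := by
    by_contra hne
    have habsS : 0 < |S| := abs_pos.2 hne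
    set t : ℝ := min δ (|S| / k) with ht
    have htpos : 0 < t := lt_min hδpos (div_pos habsS hkpos)
    set ε : ℝ := t * S / |S| with hε
    have hεabs : |ε| ≤ δ := by
      rw [hε, abs_div, abs_mul, abs_abs, abs_of_pos htpos]
      rw [mul_div_assoc, div_self (ne_of_gt habsS), mul_one]
      exact min_le_left _ _
    have hεS : ε * S = t * |S| := by
      rw [hε]
      field_simp
      linear_combination (-1 : ℝ) * sq_abs S
    have hεsq : ε ^ 2 = t ^ 2 := by
      rw [hε, div_pow, mul_pow, sq_abs, mul_div_assoc,
        div_self (pow_ne_zero 2 hne), mul_one]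
    have hk2 : t * k ≤ |S| := by
      have : t ≤ |S| / k := min_le_right _ _
      calc t * k ≤ (|S| / k) * k := by nlinarith
        _ = |S| := by field_simp
    have := key ε hεabs
    rw [hεsq] at this
    nlinarith [this, hεS, htpos, habsS]
  have : ∑ i ∈ K, y i - k * c = 0 := by
    rw [hS, Finset.sum_sub_distrib, Finset.sum_const] at hS0
    simpa [hk, nsmul_eq_mul] using hS0
  linarith
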